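/- Let q ≥ 3, B the standard Borel subgroup of SL₂(F_q), and g ∉ B. Then E(B, gB) ≤ (q−1)|B|², where E(B, gB) = |{(b₁, c₁, b₂, c₂) ∈ B² × (gB)² : b₁⁻¹c₁ = b₂⁻¹c₂}|. -/

import Mathlib

open Finset
open scoped Pointwise

section Aux

variable {F : Type*} [Field F] [Fintype F] [DecidableEq F]

private lemma entry_mul_zero (x y : Matrix.SpecialLinearGroup (Fin 2) F)
    (hx : x.1 1 0 = 0) (hy : y.1 1 0 = 0) : (x * y).1 1 0 = 0 := by
  simp [Matrix.SpecialLinearGroup.coe_mul, Matrix.mul_apply, Fin.sum_univ_two, hx, hy]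

private lemma entry_inv_zero (x : Matrix.SpecialLinearGroup (Fin 2) F)
    (hx : x.1 1 0 = 0) : (x⁻¹).1 1 0 = 0 := by
  simp [Matrix.SpecialLinearGroup.coe_inv, Matrix.adjugate_fin_two, hx]

private lemma conj_entry (g x : Matrix.SpecialLinearGroup (Fin 2) F)
    (hg : g.1 1 0 ≠ 0) (hx : x.1 1 0 = 0) (h : (g⁻¹ * x * g).1 1 0 = 0) :
    g.1 1 0 * x.1 0 1 = g.1 0 0 * (x.1 1 1 - x.1 0 0) := by
  simp only [Matrix.SpecialLinearGroup.coe_mul, Matrix.SpecialLinearGroup.coe_inv,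
    Matrix.adjugate_fin_two, Matrix.mul_apply, Fin.sum_univ_two, Matrix.of_apply,
    Matrix.cons_val', Matrix.cons_val_zero, Matrix.cons_val_one, Matrix.head_cons,
    Matrix.head_fin_const, Matrix.empty_val', Matrix.cons_val_fin_one] at h
  rw [hx] at h
  apply mul_left_cancel₀ hg
  linear_combination -h

end Aux

open scoped Classical in
/-- If `g ∉ B`, the standard Borel subgroup of `SL₂(F_q)` (`q ≥ 3`), then
`E(B, gB) ≤ (q-1)|B|²`, where `E(B, gB)` counts quadruples
`(b₁, c₁, b₂, c₂) ∈ B × gB × B × gB` with `b₁⁻¹ c₁ = b₂⁻¹ c₂`. -/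
theorem energy_B_gB_le {F : Type*} [Field F] [Fintype F] [DecidableEq F] (q : ℕ)
    (hq : Fintype.card F = q) (hq3 : 3 ≤ q)
    (g : Matrix.SpecialLinearGroup (Fin 2) F) (hg : g.1 1 0 ≠ 0)
    (B : Finset (Matrix.SpecialLinearGroup (Fin 2) F))
    (hB : B = Finset.univ.filter fun h : Matrix.SpecialLinearGroup (Fin 2) F => h.1 1 0 = 0) :
    ((B ×ˢ (g • B) ×ˢ B ×ˢ (g • B)).filter
      (fun t : Matrix.SpecialLinearGroup (Fin 2) F × Matrix.SpecialLinearGroup (Fin 2) F ×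
          Matrix.SpecialLinearGroup (Fin 2) F × Matrix.SpecialLinearGroup (Fin 2) F =>
        t.1⁻¹ * t.2.1 = t.2.2.1⁻¹ * t.2.2.2)).card ≤ (q - 1) * B.card ^ 2 := by
  classical
  let SL := Matrix.SpecialLinearGroup (Fin 2) F
  set T : Finset (Matrix.SpecialLinearGroup (Fin 2) F) := Finset.univ.filter
    (fun x => x.1 1 0 = 0 ∧ (g⁻¹ * x * g).1 1 0 = 0) with hT
  have memB : ∀ x : SL, x ∈ B ↔ x.1 1 0 = 0 := by
    intro x; rw [hB]; simp
  -- Step 1: inject quadruples into B ×ˢ (g•B) ×ˢ T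
  have step1 : ((B ×ˢ (g • B) ×ˢ B ×ˢ (g • B)).filter
      (fun t : SL × SL × SL × SL => t.1⁻¹ * t.2.1 = t.2.2.1⁻¹ * t.2.2.2)).card
      ≤ (B ×ˢ (g • B) ×ˢ T).card := by
    apply Finset.card_le_card_of_injOn
      (fun t : SL × SL × SL × SL => (t.1, t.2.1, t.2.2.1 * t.1⁻¹))
    · rintro ⟨b₁, c₁, b₂, c₂⟩ ht
      simp only [Finset.mem_coe, Finset.mem_filter, Finset.mem_product] at ht
      obtain ⟨⟨hb₁, hc₁, hb₂, hc₂⟩, heq⟩ := ht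
      simp only [Finset.mem_coe, Finset.mem_product]
      refine ⟨hb₁, hc₁, ?_⟩
      rw [hT, Finset.mem_filter]
      refine ⟨Finset.mem_univ _, ?_, ?_⟩
      · exact entry_mul_zero _ _ ((memB b₂).mp hb₂) (entry_inv_zero _ ((memB b₁).mp hb₁))
      · obtain ⟨u, hu, rfl⟩ := Finset.mem_smul_finset.mp hc₁
        obtain ⟨v, hv, rfl⟩ := Finset.mem_smul_finset.mp hc₂
        simp only [smul_eq_mul] at heq ⊢
        have hkey : b₂ * b₁⁻¹ = (g * v) * (g * u)⁻¹ := by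
          rw [show b₂ * b₁⁻¹ = b₂ * (b₁⁻¹ * (g * u)) * (g * u)⁻¹ by group, heq]
          rw [mul_inv_cancel_left]
        have : g⁻¹ * (b₂ * b₁⁻¹) * g = v * u⁻¹ := by rw [hkey]; group
        rw [this]
        exact entry_mul_zero _ _ ((memB v).mp hv) (entry_inv_zero _ ((memB u).mp hu))
    · rintro ⟨b₁, c₁, b₂, c₂⟩ hp ⟨b₁', c₁', b₂', c₂'⟩ hq' hfe
      simp only [Finset.coe_filter, Set.mem_setOf_eq] at hp hq'
      simp only [Prod.mk.injEq] at hfe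
      obtain ⟨h1, h2, h3⟩ := hfe
      have hb₂ : b₂ = b₂' := by
        have := h3
        rw [h1] at this
        exact mul_right_cancel this
      have hc₂ : c₂ = c₂' := by
        have e1 : c₂ = b₂ * (b₁⁻¹ * c₁) := by rw [hp.2, mul_inv_cancel_left]
        have e2 : c₂' = b₂' * (b₁'⁻¹ * c₁') := by rw [hq'.2, mul_inv_cancel_left]
        rw [e1, e2, h1, h2, hb₂]
      exact Prod.ext h1 (Prod.ext h2 (Prod.ext hb₂ hc₂))
  -- Step 2: |T| ≤ q - 1
  have step2 : T.card ≤ q - 1 := by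
    have hinj : T.card ≤ (Finset.univ.filter (fun a : F => a ≠ 0)).card := by
      apply Finset.card_le_card_of_injOn (fun x : SL => x.1 0 0)
      · intro x hx
        rw [hT, Finset.mem_coe, Finset.mem_filter] at hx
        obtain ⟨-, hx10, -⟩ := hx
        have hdet := x.2
        rw [Matrix.det_fin_two, hx10] at hdet
        simp only [Finset.mem_coe, Finset.mem_filter, Finset.mem_univ, true_and]
        intro h0
        rw [h0] at hdet
        simp at hdet
      · intro x hx y hy hxy
        replace hxy : x.1 0 0 = y.1 0 0 := hxy
        rw [hT] at hx hy
        simp only [Finset.coe_filter, Set.mem_setOf_eq, Finset.mem_univ, true_and] at hx hy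
        obtain ⟨hx10, hxc⟩ := hx
        obtain ⟨hy10, hyc⟩ := hy
        have hdx := x.2; have hdy := y.2
        rw [Matrix.det_fin_two, hx10] at hdx
        rw [Matrix.det_fin_two, hy10] at hdy
        simp only [mul_zero, sub_zero] at hdx hdy
        have hx00 : x.1 0 0 ≠ 0 := by
          intro h0; rw [h0] at hdx; simp at hdx
        have h11 : x.1 1 1 = y.1 1 1 := by
          have h1 : x.1 0 0 * x.1 1 1 = x.1 0 0 * y.1 1 1 := by
            rw [hdx, hxy, hdy]
          exact mul_left_cancel₀ hx00 h1
        have h01 : x.1 0 1 = y.1 0 1 := by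
          have e1 := conj_entry g x hg hx10 hxc
          have e2 := conj_entry g y hg hy10 hyc
          apply mul_left_cancel₀ hg
          rw [e1, e2, hxy, h11]
        apply Subtype.ext
        ext i j
        fin_cases i <;> fin_cases j <;>
          simp_all
    refine hinj.trans ?_
    have : (Finset.univ.filter (fun a : F => a ≠ 0)) = Finset.univ.erase 0 := by
      ext a; simp [eq_comm]
    rw [this, Finset.card_erase_of_mem (Finset.mem_univ _), Finset.card_univ, hq]
  -- combine
  refine step1.trans ?_
  rw [Finset.card_product, Finset.card_product, Finset.card_smul_finset]
  calc B.card * (B.card * T.card) ≤ B.card * (B.card * (q - 1)) := by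
        exact Nat.mul_le_mul_left _ (Nat.mul_le_mul_left _ step2)
    _ = (q - 1) * B.card ^ 2 := by ring
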